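/- Let A be an associative unital algebra, δ a derivation of A, and suppose A is δ-simple (no proper nonzero δ-stable two-sided ideals). If ker δ ⊆ Z(A) fails, still: any two-sided ideal I of the subalgebra A_0 = ker δ with A = Z(A)·A_0 and I generating a δ-stable ideal of A must be 0 or A_0; consequently, if A is δ-simple and A = Z(A)·A_0, then A_0 is a simple algebra or zero. -/

import Mathlib

open Function

section Stmt9Aux

variable {A : Type*} [Ring A]

private lemma ccomm {z : A} (hz : z ∈ Set.center A) (x : A) : z * x = x * z :=
  (Semigroup.mem_center_iff.mp hz x).symm

private lemma cswap {z : A} (hz : z ∈ Set.center A) (a b : A) : a * (z * b) = z * (a * b) := by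
  rw [← mul_assoc, ← ccomm hz a, mul_assoc]

private lemma cmul {y z : A} (hy : y ∈ Set.center A) (hz : z ∈ Set.center A) :
    y * z ∈ Set.center A := by
  rw [Semigroup.mem_center_iff] at hy hz ⊢
  intro g
  rw [← mul_assoc, hy g, mul_assoc, hz g, ← mul_assoc]

private lemma cneg {z : A} (hz : z ∈ Set.center A) : -z ∈ Set.center A := by
  rw [Semigroup.mem_center_iff] at hz ⊢
  intro g
  rw [mul_neg, neg_mul, hz g]

private lemma csub {y z : A} (hy : y ∈ Set.center A) (hz : z ∈ Set.center A) :
    y - z ∈ Set.center A := by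
  rw [Semigroup.mem_center_iff] at hy hz ⊢
  intro g
  rw [mul_sub, sub_mul, hy g, hz g]

private lemma cone : (1 : A) ∈ Set.center A := by
  rw [Semigroup.mem_center_iff]; intro g; rw [mul_one, one_mul]

private lemma czero : (0 : A) ∈ Set.center A := by
  rw [Semigroup.mem_center_iff]; intro g; rw [mul_zero, zero_mul]

private lemma closure_forall {Sgen : Set A} {P : A → Prop} (h0 : P 0)
    (hA : ∀ a b, P a → P b → P (a + b)) (hN : ∀ a, P a → P (-a))
    (hgen : ∀ x ∈ Sgen, P x) : ∀ y ∈ AddSubgroup.closure Sgen, P y := fun _ hy =>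
  (AddSubgroup.closure_le ⟨⟨⟨setOf P, fun {a b} ha hb => hA a b ha hb⟩, h0⟩,
    fun {a} ha => hN a ha⟩).mpr hgen hy

section Delta

variable (δ : A → A)

private lemma dzero (hadd : ∀ a b, δ (a + b) = δ a + δ b) : δ 0 = 0 := by
  have h := hadd 0 0
  rw [add_zero] at h
  exact (left_eq_add.mp h)

private lemma dneg (hadd : ∀ a b, δ (a + b) = δ a + δ b) (a : A) : δ (-a) = - δ a :=
  (AddMonoidHom.mk' δ hadd).map_neg a

private lemma done (hleib : ∀ a b, δ (a * b) = δ a * b + a * δ b) : δ 1 = 0 := by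
  have h := hleib 1 1
  rw [mul_one, one_mul, mul_one] at h
  exact (left_eq_add.mp h)

private lemma dsum (hadd : ∀ a b, δ (a + b) = δ a + δ b) (T : Finset ℕ) (f : ℕ → A) :
    δ (∑ i ∈ T, f i) = ∑ i ∈ T, δ (f i) :=
  map_sum (AddMonoidHom.mk' δ hadd) f T

private lemma dcenter (hadd : ∀ a b, δ (a + b) = δ a + δ b)
    (hleib : ∀ a b, δ (a * b) = δ a * b + a * δ b)
    {z : A} (hz : z ∈ Set.center A) : δ z ∈ Set.center A := by
  rw [Semigroup.mem_center_iff]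
  intro g
  have key : δ z * g + z * δ g = δ g * z + g * δ z := by
    rw [← hleib z g, ← hleib g z, ccomm hz g]
  rw [ccomm hz (δ g)] at key
  -- key : δ z * g + δ g * z = δ g * z + g * δ z
  rw [add_comm (δ z * g) (δ g * z)] at key
  exact (add_left_cancel key).symm

private lemma dicenter (hadd : ∀ a b, δ (a + b) = δ a + δ b)
    (hleib : ∀ a b, δ (a * b) = δ a * b + a * δ b)
    {z : A} (hz : z ∈ Set.center A) : ∀ k, δ^[k] z ∈ Set.center A := by
  intro k
  induction k with
  | zero => simpa using hz
  | succ k ih =>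
    rw [Function.iterate_succ_apply']
    exact dcenter δ hadd hleib ih

end Delta

section Ideals

private lemma one_mem_der (δ : A → A)
    (hadd : ∀ a b, δ (a + b) = δ a + δ b)
    (hleib : ∀ a b, δ (a * b) = δ a * b + a * δ b)
    (hsimple : ∀ I : TwoSidedIdeal A, (∀ x ∈ I, δ x ∈ I) → I = ⊥ ∨ I = ⊤)
    {zb : A} (hzb : zb ∈ Set.center A) (hzb0 : zb ≠ 0) :
    (1 : A) ∈ AddSubgroup.closure {x : A | ∃ (k : ℕ) (a : A), x = δ^[k] zb * a} := by
  set Gen : Set A := {x : A | ∃ (k : ℕ) (a : A), x = δ^[k] zb * a} with hGen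
  set Cl : AddSubgroup A := AddSubgroup.closure Gen with hCl
  have hml : ∀ x y, y ∈ Cl → x * y ∈ Cl := by
    intro x
    refine closure_forall (P := fun y => x * y ∈ Cl) ?_ ?_ ?_ ?_
    · show x * 0 ∈ Cl
      rw [mul_zero]; exact Cl.zero_mem
    · intro a b ha hb
      show x * (a + b) ∈ Cl
      rw [mul_add]; exact Cl.add_mem ha hb
    · intro a ha
      show x * (-a) ∈ Cl
      rw [mul_neg]; exact Cl.neg_mem ha
    · rintro w ⟨k, a, rfl⟩
      exact AddSubgroup.subset_closure ⟨k, x * a, cswap (dicenter δ hadd hleib hzb k) x a⟩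
  have hmr : ∀ x y, y ∈ Cl → y * x ∈ Cl := by
    intro x
    refine closure_forall (P := fun y => y * x ∈ Cl) ?_ ?_ ?_ ?_
    · show 0 * x ∈ Cl
      rw [zero_mul]; exact Cl.zero_mem
    · intro a b ha hb
      show (a + b) * x ∈ Cl
      rw [add_mul]; exact Cl.add_mem ha hb
    · intro a ha
      show (-a) * x ∈ Cl
      rw [neg_mul]; exact Cl.neg_mem ha
    · rintro w ⟨k, a, rfl⟩
      exact AddSubgroup.subset_closure ⟨k, a * x, by rw [mul_assoc]⟩
  have hstab : ∀ y, y ∈ Cl → δ y ∈ Cl := by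
    refine closure_forall (P := fun y => δ y ∈ Cl) ?_ ?_ ?_ ?_
    · show δ 0 ∈ Cl
      rw [dzero δ hadd]; exact Cl.zero_mem
    · intro a b ha hb
      show δ (a + b) ∈ Cl
      rw [hadd]; exact Cl.add_mem ha hb
    · intro a ha
      show δ (-a) ∈ Cl
      rw [dneg δ hadd]; exact Cl.neg_mem ha
    · rintro w ⟨k, a, rfl⟩
      show δ (δ^[k] zb * a) ∈ Cl
      rw [hleib]
      refine Cl.add_mem ?_ ?_
      · exact AddSubgroup.subset_closure ⟨k + 1, a, by rw [Function.iterate_succ_apply']⟩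
      · exact AddSubgroup.subset_closure ⟨k, δ a, rfl⟩
  let I : TwoSidedIdeal A := TwoSidedIdeal.mk' (Cl : Set A) Cl.zero_mem
    (fun {x y} hx hy => Cl.add_mem hx hy) (fun {x} hx => Cl.neg_mem hx)
    (fun {x y} hy => hml x y hy) (fun {x y} hx => hmr y x hx)
  have hmem : ∀ x : A, x ∈ I ↔ x ∈ Cl := fun x => TwoSidedIdeal.mem_mk' _ _ _ _ _ _ x
  have hIstab : ∀ x ∈ I, δ x ∈ I := by
    intro x hx
    rw [hmem] at hx ⊢
    exact hstab x hx
  rcases hsimple I hIstab with hbot | htop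
  · exfalso
    have hzmem : zb ∈ I := by
      rw [hmem]
      exact AddSubgroup.subset_closure ⟨0, 1, by simp⟩
    rw [hbot, TwoSidedIdeal.mem_bot] at hzmem
    exact hzb0 hzmem
  · have : (1 : A) ∈ I := by rw [htop]; exact TwoSidedIdeal.mem_top A
    rwa [hmem] at this

private lemma kill (δ : A → A)
    (hadd : ∀ a b, δ (a + b) = δ a + δ b)
    (hleib : ∀ a b, δ (a * b) = δ a * b + a * δ b)
    (hsimple : ∀ I : TwoSidedIdeal A, (∀ x ∈ I, δ x ∈ I) → I = ⊥ ∨ I = ⊤)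
    {zb : A} (hzb : zb ∈ Set.center A) (hzb0 : zb ≠ 0)
    {y : A} (hy : ∀ l, δ^[l] zb * y = 0) : y = 0 := by
  have h1 := one_mem_der δ hadd hleib hsimple hzb hzb0
  have hall : ∀ x ∈ AddSubgroup.closure {x : A | ∃ (k : ℕ) (a : A), x = δ^[k] zb * a},
      x * y = 0 := by
    refine closure_forall (P := fun x => x * y = 0) ?_ ?_ ?_ ?_
    · show (0 : A) * y = 0
      rw [zero_mul]
    · intro a b ha hb
      show (a + b) * y = 0
      rw [add_mul, ha, hb, add_zero]
    · intro a ha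
      show (-a) * y = 0
      rw [neg_mul, ha, neg_zero]
    · rintro w ⟨k, a, rfl⟩
      show (δ^[k] zb * a) * y = 0
      rw [ccomm (dicenter δ hadd hleib hzb k) a, mul_assoc, hy k, mul_zero]
  have := hall 1 h1
  rwa [one_mul] at this

private lemma extract (δ : A → A)
    (hadd : ∀ a b, δ (a + b) = δ a + δ b)
    (hleib : ∀ a b, δ (a * b) = δ a * b + a * δ b)
    (hsimple : ∀ I : TwoSidedIdeal A, (∀ x ∈ I, δ x ∈ I) → I = ⊥ ∨ I = ⊤)
    {zb zm : A} (hzb : zb ∈ Set.center A) (hzb0 : zb ≠ 0) (hzm : zm ∈ Set.center A)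
    (hsym : ∀ l k, δ^[l] zb * δ^[k] zm = δ^[k] zb * δ^[l] zm) :
    ∃ g, ∀ l, δ^[l] zb * g = δ^[l] zm := by
  have h1 := one_mem_der δ hadd hleib hsimple hzb hzb0
  have hall : ∀ x ∈ AddSubgroup.closure {x : A | ∃ (k : ℕ) (a : A), x = δ^[k] zb * a},
      ∃ g, ∀ l, δ^[l] zb * g = δ^[l] zm * x := by
    refine closure_forall (P := fun x => ∃ g, ∀ l, δ^[l] zb * g = δ^[l] zm * x) ?_ ?_ ?_ ?_
    · exact ⟨0, fun l => by rw [mul_zero, mul_zero]⟩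
    · rintro a b ⟨g1, hg1⟩ ⟨g2, hg2⟩
      exact ⟨g1 + g2, fun l => by rw [mul_add, mul_add, hg1 l, hg2 l]⟩
    · rintro a ⟨g, hg⟩
      exact ⟨-g, fun l => by rw [mul_neg, mul_neg, hg l]⟩
    · rintro w ⟨k, a, rfl⟩
      refine ⟨δ^[k] zm * a, fun l => ?_⟩
      rw [← mul_assoc, hsym l k, ← mul_assoc,
        ccomm (dicenter δ hadd hleib hzb k) (δ^[l] zm), mul_assoc]
  obtain ⟨g, hg⟩ := hall 1 h1
  exact ⟨g, fun l => by have := hg l; rwa [mul_one] at this⟩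

private lemma invC (δ : A → A)
    (hadd : ∀ a b, δ (a + b) = δ a + δ b)
    (hleib : ∀ a b, δ (a * b) = δ a * b + a * δ b)
    (hsimple : ∀ I : TwoSidedIdeal A, (∀ x ∈ I, δ x ∈ I) → I = ⊥ ∨ I = ⊤)
    {c : A} (hc : c ∈ Set.center A) (hdc : δ c = 0) (hc0 : c ≠ 0) :
    ∃ u, u ∈ Set.center A ∧ δ u = 0 ∧ c * u = 1 ∧ u * c = 1 := by
  let I : TwoSidedIdeal A := TwoSidedIdeal.mk' {x : A | ∃ a, x = c * a}
    ⟨0, (mul_zero c).symm⟩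
    (fun {x y} ⟨a, ha⟩ ⟨b, hb⟩ => ⟨a + b, by rw [ha, hb, mul_add]⟩)
    (fun {x} ⟨a, ha⟩ => ⟨-a, by rw [ha, mul_neg]⟩)
    (fun {x y} ⟨a, ha⟩ => ⟨x * a, by rw [ha, cswap hc x a]⟩)
    (fun {x y} ⟨a, ha⟩ => ⟨a * y, by rw [ha, mul_assoc]⟩)
  have hmem : ∀ x : A, x ∈ I ↔ ∃ a, x = c * a := fun x => TwoSidedIdeal.mem_mk' _ _ _ _ _ _ x
  have hIstab : ∀ x ∈ I, δ x ∈ I := by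
    intro x hx
    rw [hmem] at hx ⊢
    obtain ⟨a, rfl⟩ := hx
    exact ⟨δ a, by rw [hleib, hdc, zero_mul, zero_add]⟩
  rcases hsimple I hIstab with hbot | htop
  · exfalso
    have hcmem : c ∈ I := by rw [hmem]; exact ⟨1, (mul_one c).symm⟩
    rw [hbot, TwoSidedIdeal.mem_bot] at hcmem
    exact hc0 hcmem
  · have h1 : (1 : A) ∈ I := by rw [htop]; exact TwoSidedIdeal.mem_top A
    rw [hmem] at h1
    obtain ⟨u, hu⟩ := h1
    have hcu : c * u = 1 := hu.symm
    have huc : u * c = 1 := by rw [← ccomm hc u]; exact hcu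
    have hcdu : c * δ u = 0 := by
      have h2 := congrArg δ hcu
      rw [hleib, hdc, zero_mul, zero_add, done δ hleib] at h2
      exact h2
    have hdu : δ u = 0 := by
      calc δ u = 1 * δ u := (one_mul _).symm
        _ = u * c * δ u := by rw [huc]
        _ = u * (c * δ u) := mul_assoc _ _ _
        _ = 0 := by rw [hcdu, mul_zero]
    have hucen : u ∈ Set.center A := by
      rw [Semigroup.mem_center_iff]
      intro g
      have key : u * g = g * u := by
        calc u * g
            = u * g * (c * u) := by rw [hcu, mul_one]
          _ = u * (g * c) * u := by rw [← mul_assoc (u * g) c u, mul_assoc u g c]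
          _ = u * (c * g) * u := by rw [← ccomm hc g]
          _ = u * c * (g * u) := by rw [← mul_assoc u c g, mul_assoc (u * c) g u]
          _ = g * u := by rw [huc, one_mul]
      exact key.symm
    exact ⟨u, hucen, hdu, hcu, huc⟩

end Ideals

section MTsec

private lemma MT (δ : A → A)
    (hadd : ∀ a b, δ (a + b) = δ a + δ b)
    (hleib : ∀ a b, δ (a * b) = δ a * b + a * δ b)
    (hsimple : ∀ I : TwoSidedIdeal A, (∀ x ∈ I, δ x ∈ I) → I = ⊥ ∨ I = ⊤) :
    ∀ (n : ℕ) (s : Finset ℕ), s.card ≤ n → ∀ (z e : ℕ → A),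
      (∀ i ∈ s, z i ∈ Set.center A) → (∀ i ∈ s, z i ≠ 0) → (∀ i ∈ s, δ (e i) = 0) →
      (∑ i ∈ s, z i * e i) = 0 →
      s = ∅ ∨ ∃ c : ℕ → A, (∀ i ∈ s, c i ∈ Set.center A ∧ δ (c i) = 0) ∧
        (∃ i ∈ s, c i ≠ 0) ∧ ∑ i ∈ s, c i * e i = 0 := by
  intro n
  induction n with
  | zero =>
    intro s hcard _ _ _ _ _ _
    left
    exact Finset.card_eq_zero.mp (Nat.le_zero.mp hcard)
  | succ n IH =>
    intro s hcard z e hzc hz0 he hrel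
    classical
    rcases Finset.eq_empty_or_nonempty s with rfl | ⟨j0, hj0⟩
    · left; rfl
    have hdiff : ∀ k, ∑ i ∈ s, δ^[k] (z i) * e i = 0 := by
      intro k
      induction k with
      | zero => simpa using hrel
      | succ k ihk =>
        have h2 : ∑ i ∈ s, δ^[k+1] (z i) * e i = ∑ i ∈ s, δ (δ^[k] (z i) * e i) := by
          refine Finset.sum_congr rfl fun i hi => ?_
          rw [hleib, he i hi, mul_zero, add_zero, Function.iterate_succ_apply']
        rw [h2, ← dsum δ hadd, ihk, dzero δ hadd]
    by_cases hW : ∃ k m, m ∈ s ∧ z j0 * δ^[k] (z m) ≠ δ^[k] (z j0) * z m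
    · -- case A : shorten the relation
      obtain ⟨k, m, hm, hWm⟩ := hW
      set W : ℕ → A := fun i => z j0 * δ^[k] (z i) - δ^[k] (z j0) * z i with hWdef
      set T : Finset ℕ := s.filter (fun i => W i ≠ 0) with hTdef
      have hTsub : T ⊆ s := Finset.filter_subset _ _
      have hWj0 : W j0 = 0 := by
        show z j0 * δ^[k] (z j0) - δ^[k] (z j0) * z j0 = 0
        rw [← ccomm (dicenter δ hadd hleib (hzc j0 hj0) k) (z j0), sub_self]
      have hj0T : j0 ∉ T := by
        intro h
        exact ((Finset.mem_filter.mp h).2) hWj0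
      have hcardT : T.card < s.card :=
        Finset.card_lt_card ⟨hTsub, fun hss => hj0T (hss hj0)⟩
      have hrelS : ∑ i ∈ s, W i * e i = 0 := by
        have h1 : ∀ i ∈ s, W i * e i
            = z j0 * (δ^[k] (z i) * e i) - δ^[k] (z j0) * (z i * e i) := by
          intro i _
          show (z j0 * δ^[k] (z i) - δ^[k] (z j0) * z i) * e i = _
          rw [sub_mul, mul_assoc, mul_assoc]
        rw [Finset.sum_congr rfl h1, Finset.sum_sub_distrib, ← Finset.mul_sum, ← Finset.mul_sum,
          hdiff k, hrel, mul_zero, mul_zero, sub_zero]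
      have hrelT : ∑ i ∈ T, W i * e i = 0 := by
        have hsplit := Finset.sum_filter_add_sum_filter_not s (fun i => W i ≠ 0)
          (fun i => W i * e i)
        have hzero : ∑ i ∈ s.filter (fun i => ¬ W i ≠ 0), W i * e i = 0 :=
          Finset.sum_eq_zero (fun i hi => by
            rw [not_not.mp (Finset.mem_filter.mp hi).2, zero_mul])
        rw [hzero, add_zero, hrelS] at hsplit
        exact hsplit
      have hWc : ∀ i ∈ T, W i ∈ Set.center A := by
        intro i hiT
        have hi := hTsub hiT
        exact csub (cmul (hzc j0 hj0) (dicenter δ hadd hleib (hzc i hi) k))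
          (cmul (dicenter δ hadd hleib (hzc j0 hj0) k) (hzc i hi))
      have hIH := IH T (by omega) W e hWc (fun i hi => (Finset.mem_filter.mp hi).2)
        (fun i hi => he i (hTsub hi)) hrelT
      rcases hIH with hTemp | ⟨c, hc1, ⟨i1, hi1, hi1ne⟩, hc3⟩
      · exfalso
        have hmT : m ∈ T := Finset.mem_filter.mpr ⟨hm, sub_ne_zero.mpr hWm⟩
        rw [hTemp] at hmT
        exact absurd hmT (Finset.notMem_empty m)
      · right
        refine ⟨fun i => if i ∈ T then c i else 0, ?_, ?_, ?_⟩
        · intro i _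
          by_cases hiT : i ∈ T
          · simpa [hiT] using hc1 i hiT
          · simp only [hiT, if_false]
            exact ⟨czero, dzero δ hadd⟩
        · exact ⟨i1, hTsub hi1, by simp [hi1, hi1ne]⟩
        · have h1 : ∀ i ∈ s, (if i ∈ T then c i else 0) * e i
              = if i ∈ T then c i * e i else 0 := by
            intro i _
            by_cases hiT : i ∈ T <;> simp [hiT]
          rw [Finset.sum_congr rfl h1, Finset.sum_ite_mem,
            Finset.inter_eq_right.mpr hTsub]
          exact hc3
    · -- case B : full symmetry and dependency
      push_neg at hW
      have hsym : ∀ m ∈ s, ∀ l k, δ^[l] (z j0) * δ^[k] (z m) = δ^[k] (z j0) * δ^[l] (z m) := by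
        intro m hm l
        induction l with
        | zero =>
          intro k
          simpa using hW k m hm
        | succ l ihl =>
          intro k
          have h1 := congrArg δ (ihl k)
          rw [hleib, hleib] at h1
          rw [← Function.iterate_succ_apply' δ l (z j0), ← Function.iterate_succ_apply' δ k (z m),
            ← Function.iterate_succ_apply' δ k (z j0),
            ← Function.iterate_succ_apply' δ l (z m)] at h1
          rw [ihl (k+1)] at h1
          rw [add_comm (δ^[l+1] (z j0) * δ^[k] (z m)) (δ^[k+1] (z j0) * δ^[l] (z m))] at h1
          exact add_left_cancel h1
      have hex : ∀ m, m ∈ s → ∃ g, ∀ l, δ^[l] (z j0) * g = δ^[l] (z m) := fun m hm =>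
        extract δ hadd hleib hsimple (hzc j0 hj0) (hz0 j0 hj0) (hzc m hm) (hsym m hm)
      set g : ℕ → A := fun m => if h : m ∈ s then (hex m h).choose else 0 with hgdef
      have hgspec : ∀ m ∈ s, ∀ l, δ^[l] (z j0) * g m = δ^[l] (z m) := by
        intro m hm l
        simp only [hgdef, dif_pos hm]
        exact (hex m hm).choose_spec l
      have hgd : ∀ m ∈ s, δ (g m) = 0 := by
        intro m hm
        refine kill δ hadd hleib hsimple (hzc j0 hj0) (hz0 j0 hj0) (fun l => ?_)
        have h1 := congrArg δ (hgspec m hm l)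
        rw [hleib, ← Function.iterate_succ_apply' δ l (z j0),
          ← Function.iterate_succ_apply' δ l (z m), ← hgspec m hm (l+1)] at h1
        exact add_eq_left.mp h1
      have hgc : ∀ m ∈ s, g m ∈ Set.center A := by
        intro m hm
        rw [Semigroup.mem_center_iff]
        intro x
        have hy : ∀ l, δ^[l] (z j0) * (g m * x - x * g m) = 0 := by
          intro l
          rw [mul_sub, ← mul_assoc, hgspec m hm l,
            ← cswap (dicenter δ hadd hleib (hzc j0 hj0) l) x (g m), hgspec m hm l,
            ccomm (dicenter δ hadd hleib (hzc m hm) l) x, sub_self]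
        have hsub := kill δ hadd hleib hsimple (hzc j0 hj0) (hz0 j0 hj0) hy
        exact (sub_eq_zero.mp hsub).symm
      have hE : ∑ m ∈ s, g m * e m = 0 := by
        refine kill δ hadd hleib hsimple (hzc j0 hj0) (hz0 j0 hj0) (fun l => ?_)
        rw [Finset.mul_sum]
        have h1 : ∀ m ∈ s, δ^[l] (z j0) * (g m * e m) = δ^[l] (z m) * e m := by
          intro m hm
          rw [← mul_assoc, hgspec m hm l]
        rw [Finset.sum_congr rfl h1, hdiff l]
      have hgj0 : g j0 ≠ 0 := by
        intro h0
        have hsp := hgspec j0 hj0 0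
        rw [h0, mul_zero] at hsp
        simp only [Function.iterate_zero_apply] at hsp
        exact (hz0 j0 hj0) hsp.symm
      right
      exact ⟨g, fun i hi => ⟨hgc i hi, hgd i hi⟩, ⟨j0, hj0, hgj0⟩, hE⟩

end MTsec

section CruxSec

private lemma sum_in_S {S : Set A} (hS0 : (0:A) ∈ S) (hSadd : ∀ a b, a ∈ S → b ∈ S → a + b ∈ S)
    (T : Finset ℕ) (f : ℕ → A) (h : ∀ i ∈ T, f i ∈ S) : (∑ i ∈ T, f i) ∈ S :=
  Finset.sum_induction f (· ∈ S) (fun a b ha hb => hSadd a b ha hb) hS0 h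

private lemma crux [Nontrivial A] (δ : A → A)
    (hadd : ∀ a b, δ (a + b) = δ a + δ b)
    (hleib : ∀ a b, δ (a * b) = δ a * b + a * δ b)
    (hsimple : ∀ I : TwoSidedIdeal A, (∀ x ∈ I, δ x ∈ I) → I = ⊥ ∨ I = ⊤)
    (S : Set A) (hSsub : S ⊆ {b : A | δ b = 0}) (hS0 : (0:A) ∈ S)
    (hSadd : ∀ a b, a ∈ S → b ∈ S → a + b ∈ S)
    (hSmul : ∀ c : A, δ c = 0 → ∀ s ∈ S, c * s ∈ S ∧ s * c ∈ S) :
    ∀ (n : ℕ) (T : Finset ℕ), T.card ≤ n → ∀ (z e : ℕ → A),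
      (∀ i ∈ T, z i ∈ Set.center A) → (∀ i ∈ T, e i ∈ S) →
      ∀ b : A, δ b = 0 → b = ∑ i ∈ T, z i * e i → b ∈ S := by
  intro n
  induction n with
  | zero =>
    intro T hcard z e _ _ b _ hrep
    have hT : T = ∅ := Finset.card_eq_zero.mp (Nat.le_zero.mp hcard)
    rw [hT, Finset.sum_empty] at hrep
    rw [hrep]; exact hS0
  | succ n IH =>
    intro T hcard z e hzc heS b hb hrep
    classical
    by_cases hzero : ∀ i ∈ T, z i ≠ 0
    · rcases Finset.eq_empty_or_nonempty T with rfl | hTne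
      · rw [Finset.sum_empty] at hrep
        rw [hrep]; exact hS0
      obtain ⟨j, hj⟩ := Infinite.exists_notMem_finset T
      set z' : ℕ → A := fun i => if i = j then 1 else -(z i) with hz'
      set e' : ℕ → A := fun i => if i = j then b else e i with he'
      have hA1 : ∀ i ∈ insert j T, z' i ∈ Set.center A := by
        intro i hi
        rcases Finset.mem_insert.mp hi with rfl | hiT
        · simp only [hz', if_pos rfl]; exact cone
        · have hij : i ≠ j := fun h => hj (h ▸ hiT)
          simp only [hz', if_neg hij]
          exact cneg (hzc i hiT)
      have hA2 : ∀ i ∈ insert j T, z' i ≠ 0 := by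
        intro i hi
        rcases Finset.mem_insert.mp hi with rfl | hiT
        · simp only [hz', if_pos rfl]; exact one_ne_zero
        · have hij : i ≠ j := fun h => hj (h ▸ hiT)
          simp only [hz', if_neg hij]
          exact neg_ne_zero.mpr (hzero i hiT)
      have hA3 : ∀ i ∈ insert j T, δ (e' i) = 0 := by
        intro i hi
        rcases Finset.mem_insert.mp hi with rfl | hiT
        · simp only [he', if_pos rfl]; exact hb
        · have hij : i ≠ j := fun h => hj (h ▸ hiT)
          simp only [he', if_neg hij]
          exact hSsub (heS i hiT)
      have hA4 : ∑ i ∈ insert j T, z' i * e' i = 0 := by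
        rw [Finset.sum_insert hj]
        have h1 : ∀ i ∈ T, z' i * e' i = -(z i * e i) := by
          intro i hiT
          have hij : i ≠ j := fun h => hj (h ▸ hiT)
          simp only [hz', he', if_neg hij, neg_mul]
        rw [Finset.sum_congr rfl h1]
        simp only [hz', he', if_pos rfl, one_mul]
        rw [Finset.sum_neg_distrib, ← hrep, add_neg_cancel]
      have hmt := MT δ hadd hleib hsimple (insert j T).card (insert j T) le_rfl z' e'
        hA1 hA2 hA3 hA4
      rcases hmt with hemp | ⟨c, hc1, ⟨i0, hi0, hi0ne⟩, hcsum⟩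
      · exact absurd hemp (Finset.insert_ne_empty j T)
      have hcsum' : c j * b + ∑ i ∈ T, c i * e i = 0 := by
        rw [Finset.sum_insert hj] at hcsum
        have h1 : ∀ i ∈ T, c i * e' i = c i * e i := by
          intro i hiT
          have hij : i ≠ j := fun h => hj (h ▸ hiT)
          simp only [he', if_neg hij]
        rw [Finset.sum_congr rfl h1] at hcsum
        simpa only [he', if_pos rfl] using hcsum
      by_cases hcj : c j = 0
      · -- dependency among the e i : eliminate e i0 and recurse
        rw [hcj, zero_mul, zero_add] at hcsum'
        have hi0T : i0 ∈ T := by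
          rcases Finset.mem_insert.mp hi0 with rfl | h
          · exact absurd hcj hi0ne
          · exact h
        obtain ⟨u, huc, hud, -, huc1⟩ := invC δ hadd hleib hsimple
          (hc1 i0 hi0).1 (hc1 i0 hi0).2 hi0ne
        set z'' : ℕ → A := fun i => z i - z i0 * (u * c i) with hz''
        have h3 : ∑ i ∈ T.erase i0, c i * e i = -(c i0 * e i0) := by
          refine eq_neg_of_add_eq_zero_left ?_
          rw [Finset.sum_erase_add T _ hi0T]
          exact hcsum'
        have heq : ∑ i ∈ T.erase i0, z'' i * e i = b := by
          have h1 : ∀ i ∈ T.erase i0, z'' i * e i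
              = z i * e i - z i0 * (u * (c i * e i)) := by
            intro i _
            show (z i - z i0 * (u * c i)) * e i = _
            rw [sub_mul, mul_assoc (z i0) (u * c i) (e i), mul_assoc u (c i) (e i)]
          have h2 : ∑ i ∈ T.erase i0, z i0 * (u * (c i * e i))
              = z i0 * (u * ∑ i ∈ T.erase i0, c i * e i) := by
            rw [Finset.mul_sum, Finset.mul_sum]
          calc ∑ i ∈ T.erase i0, z'' i * e i
              = (∑ i ∈ T.erase i0, z i * e i)
                - ∑ i ∈ T.erase i0, z i0 * (u * (c i * e i)) := by
                rw [Finset.sum_congr rfl h1, Finset.sum_sub_distrib]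
            _ = (∑ i ∈ T.erase i0, z i * e i) + z i0 * e i0 := by
                rw [h2, h3, mul_neg, mul_neg, sub_neg_eq_add,
                  ← mul_assoc u (c i0) (e i0), huc1, one_mul]
            _ = ∑ i ∈ T, z i * e i := Finset.sum_erase_add T _ hi0T
            _ = b := hrep.symm
        have hz''c : ∀ i ∈ T.erase i0, z'' i ∈ Set.center A := by
          intro i hi
          have hiT := Finset.mem_of_mem_erase hi
          exact csub (hzc i hiT)
            (cmul (hzc i0 hi0T)
              (cmul huc (hc1 i (Finset.mem_insert_of_mem hiT)).1))
        have hcd : (T.erase i0).card ≤ n := by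
          have h := Finset.card_erase_of_mem hi0T
          omega
        exact IH (T.erase i0) hcd z'' e hz''c
          (fun i hi => heS i (Finset.mem_of_mem_erase hi)) b hb heq.symm
      · -- c j invertible : b is an S-combination
        obtain ⟨u, huc, hud, -, huc1⟩ := invC δ hadd hleib hsimple
          (hc1 j (Finset.mem_insert_self j T)).1 (hc1 j (Finset.mem_insert_self j T)).2 hcj
        have h1 : c j * b = -(∑ i ∈ T, c i * e i) := eq_neg_of_add_eq_zero_left hcsum'
        have hb' : b = ∑ i ∈ T, (-(u * c i)) * e i := by
          calc b = 1 * b := (one_mul b).symm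
            _ = u * c j * b := by rw [huc1]
            _ = u * (c j * b) := mul_assoc _ _ _
            _ = u * -(∑ i ∈ T, c i * e i) := by rw [h1]
            _ = -(u * ∑ i ∈ T, c i * e i) := by rw [mul_neg]
            _ = -(∑ i ∈ T, u * (c i * e i)) := by rw [Finset.mul_sum]
            _ = ∑ i ∈ T, -(u * (c i * e i)) := by rw [Finset.sum_neg_distrib]
            _ = ∑ i ∈ T, (-(u * c i)) * e i := by
                refine Finset.sum_congr rfl fun i _ => ?_
                rw [neg_mul, mul_assoc]
        rw [hb']
        refine sum_in_S hS0 hSadd T _ (fun i hiT => ?_)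
        have hq : δ (-(u * c i)) = 0 := by
          rw [dneg δ hadd, hleib, hud, zero_mul, zero_add,
            (hc1 i (Finset.mem_insert_of_mem hiT)).2, mul_zero, neg_zero]
        exact (hSmul _ hq (e i) (heS i hiT)).1
    · -- some coefficient vanishes : drop it
      push_neg at hzero
      obtain ⟨i1, hi1T, hzi1⟩ := hzero
      have hrep' : b = ∑ i ∈ T.erase i1, z i * e i := by
        rw [hrep, ← Finset.sum_erase_add T _ hi1T, hzi1, zero_mul, add_zero]
      have hcd : (T.erase i1).card ≤ n := by
        have h := Finset.card_erase_of_mem hi1T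
        omega
      exact IH (T.erase i1) hcd z e (fun i hi => hzc i (Finset.mem_of_mem_erase hi))
        (fun i hi => heS i (Finset.mem_of_mem_erase hi)) b hb hrep'

end CruxSec

section ListSec

private lemma list_sum_neg {β : Type*} (f : β → A) :
    ∀ l : List β, (l.map (fun x => -(f x))).sum = -(l.map f).sum
  | [] => by simp
  | a :: l => by
    rw [List.map_cons, List.sum_cons, List.map_cons, List.sum_cons, list_sum_neg f l, neg_add]

private lemma list_to_fin (L : List (A × A)) :
    (L.map fun p => p.1 * p.2).sum
      = ∑ i ∈ Finset.range L.length, (L.getD i (0,0)).1 * (L.getD i (0,0)).2 := by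
  induction L with
  | nil => simp
  | cons p L ih =>
    rw [List.map_cons, List.sum_cons, List.length_cons, Finset.sum_range_succ']
    simp only [List.getD_cons_succ, List.getD_cons_zero]
    rw [← ih]
    exact add_comm _ _

end ListSec
end Stmt9Aux

/-- if `A` is δ-simple and `A = Z(A)·A₀` where `A₀ = ker δ`, then
every two-sided ideal of the subalgebra `A₀` is `0` or `A₀` (so `A₀` is simple). -/
theorem stmt9 (A : Type*) [Ring A] [Nontrivial A]
    (δ : A → A) (hadd : ∀ a b, δ (a + b) = δ a + δ b)
    (hleib : ∀ a b, δ (a * b) = δ a * b + a * δ b)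
    (hsimple : ∀ I : TwoSidedIdeal A, (∀ x ∈ I, δ x ∈ I) → I = ⊥ ∨ I = ⊤)
    (hdecomp : ∀ a : A, a ∈ AddSubgroup.closure
      {r : A | ∃ z ∈ Set.center A, ∃ b : A, δ b = 0 ∧ r = z * b}) :
    ∀ S : Set A, S ⊆ {b : A | δ b = 0} →
      (0 : A) ∈ S → (∀ a b, a ∈ S → b ∈ S → a + b ∈ S) →
      (∀ a, a ∈ S → -a ∈ S) →
      (∀ c : A, δ c = 0 → ∀ s ∈ S, c * s ∈ S ∧ s * c ∈ S) →
      S = {0} ∨ S = {b : A | δ b = 0} := by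
  intro S hSsub hS0 hSadd _hSneg hSmul
  by_cases htriv : ∀ x ∈ S, x = 0
  · left
    ext x
    simp only [Set.mem_singleton_iff]
    exact ⟨fun h => htriv x h, fun h => h ▸ hS0⟩
  · right
    push_neg at htriv
    obtain ⟨s0, hs0S, hs0⟩ := htriv
    classical
    set Gen : Set A := {x : A | ∃ zz ∈ Set.center A, ∃ ss ∈ S, x = zz * ss} with hGen
    set Cl : AddSubgroup A := AddSubgroup.closure Gen with hCl
    have hgl : ∀ (x : A), ∀ w ∈ Gen, x * w ∈ Cl := by
      intro x w hw
      obtain ⟨zz, hzz, ss, hss, rfl⟩ := hw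
      refine closure_forall (P := fun y => y * (zz * ss) ∈ Cl) ?_ ?_ ?_ ?_ x (hdecomp x)
      · show (0:A) * (zz * ss) ∈ Cl
        rw [zero_mul]; exact Cl.zero_mem
      · intro a b ha hb
        show (a + b) * (zz * ss) ∈ Cl
        rw [add_mul]; exact Cl.add_mem ha hb
      · intro a ha
        show (-a) * (zz * ss) ∈ Cl
        rw [neg_mul]; exact Cl.neg_mem ha
      · rintro y ⟨z', hz', b', hb', rfl⟩
        show (z' * b') * (zz * ss) ∈ Cl
        have hEq : (z' * b') * (zz * ss) = (z' * zz) * (b' * ss) := by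
          rw [mul_assoc z' b' (zz * ss), cswap hzz b' ss, ← mul_assoc z' zz (b' * ss)]
        rw [hEq]
        exact AddSubgroup.subset_closure
          ⟨z' * zz, cmul hz' hzz, b' * ss, (hSmul b' hb' ss hss).1, rfl⟩
    have hgr : ∀ (x : A), ∀ w ∈ Gen, w * x ∈ Cl := by
      intro x w hw
      obtain ⟨zz, hzz, ss, hss, rfl⟩ := hw
      refine closure_forall (P := fun y => (zz * ss) * y ∈ Cl) ?_ ?_ ?_ ?_ x (hdecomp x)
      · show (zz * ss) * 0 ∈ Cl
        rw [mul_zero]; exact Cl.zero_mem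
      · intro a b ha hb
        show (zz * ss) * (a + b) ∈ Cl
        rw [mul_add]; exact Cl.add_mem ha hb
      · intro a ha
        show (zz * ss) * (-a) ∈ Cl
        rw [mul_neg]; exact Cl.neg_mem ha
      · rintro y ⟨z', hz', b', hb', rfl⟩
        show (zz * ss) * (z' * b') ∈ Cl
        have hEq : (zz * ss) * (z' * b') = (zz * z') * (ss * b') := by
          rw [mul_assoc zz ss (z' * b'), cswap hz' ss b', ← mul_assoc zz z' (ss * b')]
        rw [hEq]
        exact AddSubgroup.subset_closure
          ⟨zz * z', cmul hzz hz', ss * b', (hSmul b' hb' ss hss).2, rfl⟩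
    have hml : ∀ x y, y ∈ Cl → x * y ∈ Cl := by
      intro x
      refine closure_forall (P := fun y => x * y ∈ Cl) ?_ ?_ ?_ ?_
      · show x * 0 ∈ Cl
        rw [mul_zero]; exact Cl.zero_mem
      · intro a b ha hb
        show x * (a + b) ∈ Cl
        rw [mul_add]; exact Cl.add_mem ha hb
      · intro a ha
        show x * (-a) ∈ Cl
        rw [mul_neg]; exact Cl.neg_mem ha
      · intro w hw
        exact hgl x w hw
    have hmr : ∀ x y, y ∈ Cl → y * x ∈ Cl := by
      intro x
      refine closure_forall (P := fun y => y * x ∈ Cl) ?_ ?_ ?_ ?_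
      · show (0:A) * x ∈ Cl
        rw [zero_mul]; exact Cl.zero_mem
      · intro a b ha hb
        show (a + b) * x ∈ Cl
        rw [add_mul]; exact Cl.add_mem ha hb
      · intro a ha
        show (-a) * x ∈ Cl
        rw [neg_mul]; exact Cl.neg_mem ha
      · intro w hw
        exact hgr x w hw
    have hstab : ∀ y, y ∈ Cl → δ y ∈ Cl := by
      refine closure_forall (P := fun y => δ y ∈ Cl) ?_ ?_ ?_ ?_
      · show δ 0 ∈ Cl
        rw [dzero δ hadd]; exact Cl.zero_mem
      · intro a b ha hb
        show δ (a + b) ∈ Cl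
        rw [hadd]; exact Cl.add_mem ha hb
      · intro a ha
        show δ (-a) ∈ Cl
        rw [dneg δ hadd]; exact Cl.neg_mem ha
      · rintro w ⟨zz, hzz, ss, hss, rfl⟩
        show δ (zz * ss) ∈ Cl
        have hds : δ ss = 0 := hSsub hss
        rw [hleib, hds, mul_zero, add_zero]
        exact AddSubgroup.subset_closure ⟨δ zz, dcenter δ hadd hleib hzz, ss, hss, rfl⟩
    let I : TwoSidedIdeal A := TwoSidedIdeal.mk' (Cl : Set A) Cl.zero_mem
      (fun {x y} hx hy => Cl.add_mem hx hy) (fun {x} hx => Cl.neg_mem hx)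
      (fun {x y} hy => hml x y hy) (fun {x y} hx => hmr y x hx)
    have hmem : ∀ x : A, x ∈ I ↔ x ∈ Cl := fun x => TwoSidedIdeal.mem_mk' _ _ _ _ _ _ x
    have hIstab : ∀ x ∈ I, δ x ∈ I := by
      intro x hx
      rw [hmem] at hx ⊢
      exact hstab x hx
    rcases hsimple I hIstab with hbot | htop
    · exfalso
      have h1 : s0 ∈ I := by
        rw [hmem]
        exact AddSubgroup.subset_closure ⟨1, cone, s0, hs0S, (one_mul s0).symm⟩
      rw [hbot, TwoSidedIdeal.mem_bot] at h1
      exact hs0 h1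
    refine Set.Subset.antisymm hSsub ?_
    intro b hbmem
    have hb : δ b = 0 := hbmem
    have hbI : b ∈ I := by rw [htop]; exact TwoSidedIdeal.mem_top A
    rw [hmem] at hbI
    have hlist : ∃ L : List (A × A), (∀ p ∈ L, p.1 ∈ Set.center A ∧ p.2 ∈ S)
        ∧ b = (L.map fun p => p.1 * p.2).sum := by
      refine closure_forall (P := fun x => ∃ L : List (A × A),
        (∀ p ∈ L, p.1 ∈ Set.center A ∧ p.2 ∈ S)
          ∧ x = (L.map fun p => p.1 * p.2).sum) ?_ ?_ ?_ ?_ b hbI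
      · exact ⟨[], by simp, by simp⟩
      · rintro a b' ⟨L1, hL1, rfl⟩ ⟨L2, hL2, rfl⟩
        refine ⟨L1 ++ L2, ?_, by rw [List.map_append, List.sum_append]⟩
        intro p hp
        rcases List.mem_append.mp hp with h | h
        exacts [hL1 p h, hL2 p h]
      · rintro a ⟨L, hL, rfl⟩
        refine ⟨L.map (fun p => (-p.1, p.2)), ?_, ?_⟩
        · intro p hp
          obtain ⟨q, hq, rfl⟩ := List.mem_map.mp hp
          exact ⟨cneg (hL q hq).1, (hL q hq).2⟩
        · rw [List.map_map]
          have hfun : ((fun p : A × A => p.1 * p.2) ∘ fun p : A × A => (-p.1, p.2))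
              = fun p : A × A => -(p.1 * p.2) := by
            funext q
            simp
          rw [hfun, list_sum_neg (fun p : A × A => p.1 * p.2) L]
      · rintro w ⟨zz, hzz, ss, hss, rfl⟩
        refine ⟨[(zz, ss)], ?_, by simp⟩
        intro p hp
        rw [List.mem_singleton] at hp
        subst hp
        exact ⟨hzz, hss⟩
    obtain ⟨L, hL, hLsum⟩ := hlist
    have hrep : b = ∑ i ∈ Finset.range L.length,
        (L.getD i (0,0)).1 * (L.getD i (0,0)).2 := by
      rw [hLsum, list_to_fin]
    refine crux δ hadd hleib hsimple S hSsub hS0 hSadd hSmul L.length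
      (Finset.range L.length) (le_of_eq (Finset.card_range _))
      (fun i => (L.getD i (0,0)).1) (fun i => (L.getD i (0,0)).2) ?_ ?_ b hb hrep
    · intro i hi
      have hilen : i < L.length := Finset.mem_range.mp hi
      have hmemL : L.getD i (0,0) ∈ L := by
        rw [List.getD_eq_getElem L (0,0) hilen]
        exact List.getElem_mem hilen
      exact (hL _ hmemL).1
    · intro i hi
      have hilen : i < L.length := Finset.mem_range.mp hi
      have hmemL : L.getD i (0,0) ∈ L := by
        rw [List.getD_eq_getElem L (0,0) hilen]
        exact List.getElem_mem hilen
      exact (hL _ hmemL).2
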